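/- arXiv:2306.13019 — 2 statements merged into one kernel-verified Lean document; each statement's English description precedes it below -/
import Mathlib

section
/- The representation of vertices in the middle levels as triples is unique: if σ^s(xb) = σ^{s'}(x'b') for Dyck words x, x' of length 2n, bits b, b', and shifts s, s' in {0,...,2n}, then x = x', b = b', and s = s'. -/
/-- Every prefix has at least as many 1s (`true`) as 0s (`false`). -/
def IsDyckPrefix (x : List Bool) : Prop :=
  ∀ p : List Bool, p <+: x → p.count false ≤ p.count true

/-- A (balanced) Dyck word. -/
def IsDyckWord (x : List Bool) : Prop :=
  x.count true = x.count false ∧ IsDyckPrefix x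

/-- A Dyck word of length `2*n` (so with `n` ones). -/
def DyckN (n : ℕ) (x : List Bool) : Prop :=
  x.length = 2 * n ∧ x.count true = n ∧ IsDyckPrefix x

/-- Cyclic right rotation by `s` steps. -/
def rotR (s : ℕ) (x : List Bool) : List Bool :=
  x.rotate (x.length - s % x.length)

lemma count_tf (l : List Bool) : l.count true + l.count false = l.length := by
  induction l with
  | nil => simp
  | cons a l ih => cases a <;> simp [List.count_cons] <;> omega

/-- A nontrivial rotation of `x ++ [b]` cannot be of the form `x' ++ [b]`
with `x, x'` Dyck words of length `2*n`. -/
lemma key (n t : ℕ) (x x' : List Bool) (b : Bool)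
    (hx : DyckN n x) (hx' : DyckN n x') (ht : 0 < t) (ht2 : t ≤ 2 * n)
    (h : x' ++ [b] = (x ++ [b]).rotate t) : False := by
  obtain ⟨hxl, hxc, hxp⟩ := hx
  obtain ⟨hxl', hxc', hxp'⟩ := hx'
  have hxf : x.count false = n := by have := count_tf x; omega
  have hxf' : x'.count false = n := by have := count_tf x'; omega
  have hwl : (x ++ [b]).length = 2 * n + 1 := by simp [hxl]
  have hrot : (x ++ [b]).rotate t = (x.drop t ++ [b]) ++ x.take t := by
    rw [List.rotate_eq_drop_append_take (by omega),
        List.drop_append_of_le_length (by omega),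
        List.take_append_of_le_length (by omega)]
  rw [hrot] at h
  set a1 := (x.take t).count true with ha1
  set a0 := (x.take t).count false with ha0
  set d1 := (x.drop t).count true with hd1
  set d0 := (x.drop t).count false with hd0
  have hsplit1 : a1 + d1 = n := by
    rw [ha1, hd1, ← List.count_append, List.take_append_drop, hxc]
  have hsplit0 : a0 + d0 = n := by
    rw [ha0, hd0, ← List.count_append, List.take_append_drop, hxf]
  have hA : a0 ≤ a1 := hxp _ (List.take_prefix t x)
  -- `x.drop t ++ [b]` is a prefix of `x'`
  have hplen : (x.drop t ++ [b]).length = 2 * n + 1 - t := by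
    simp [List.length_drop, hxl]; omega
  have hp : (x.drop t ++ [b]) <+: x' := by
    have h1 : (x.drop t ++ [b]) <+: x' ++ [b] := ⟨x.take t, h.symm⟩
    have h2 : (x.drop t ++ [b]) = (x' ++ [b]).take (2 * n + 1 - t) := by
      have := List.prefix_iff_eq_take.mp h1
      rwa [hplen] at this
    rw [List.take_append_of_le_length (by omega)] at h2
    rw [h2]; exact List.take_prefix _ _
  have hpd := hxp' _ hp
  cases b with
  | false =>
    simp [List.count_append] at hpd
    omega
  | true =>
    simp [List.count_append] at hpd
    have hdp := hxp' _ ((List.prefix_append (x.drop t) [true]).trans hp)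
    -- `x' = x.drop t ++ [true] ++ x.take (t-1)`
    have hx'eq : x' = (x.drop t ++ [true]) ++ x.take (t - 1) := by
      have h1 : x' = (x' ++ [true]).take (2 * n) := by
        rw [List.take_append_of_le_length (le_of_eq hxl'.symm), ← hxl',
          List.take_length]
      have harith : 2 * n - (2 * n + 1 - t) = t - 1 := by omega
      rw [h1, h, List.take_append, hplen, harith,
        List.take_of_length_le (by rw [hplen]; omega), List.take_take,
        min_eq_left (by omega)]
    set e1 := (x.take (t-1)).count true with he1
    set e0 := (x.take (t-1)).count false with he0
    have hE : e0 ≤ e1 := hxp _ (List.take_prefix _ x)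
    have hc1 : d1 + 1 + e1 = n := by
      have := congrArg (List.count true) hx'eq
      simp [List.count_append, hxc'] at this; omega
    have hc0 : d0 + e0 = n := by
      have := congrArg (List.count false) hx'eq
      simp [List.count_append, hxf'] at this; omega
    omega

/-- the triple representation `⟨x,b,s⟩ = σ^s(xb)` of vertices of the
middle levels is unique. -/
theorem triple_representation_unique (n : ℕ) (x x' : List Bool) (b b' : Bool)
    (s s' : ℕ) (hx : DyckN n x) (hx' : DyckN n x') (hs : s ≤ 2 * n) (hs' : s' ≤ 2 * n)
    (h : rotR s (x ++ [b]) = rotR s' (x' ++ [b'])) :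
    x = x' ∧ b = b' ∧ s = s' := by
  have hxl := hx.1
  have hxl' := hx'.1
  have hxc := hx.2.1
  have hxc' := hx'.2.1
  have hwl : (x ++ [b]).length = 2 * n + 1 := by simp [hxl]
  have hwl' : (x' ++ [b']).length = 2 * n + 1 := by simp [hxl']
  rw [rotR, rotR, hwl, hwl', Nat.mod_eq_of_lt (by omega),
    Nat.mod_eq_of_lt (by omega)] at h
  -- first, b = b' by counting trues
  have hcnt : (x ++ [b]).count true = (x' ++ [b']).count true := by
    have h1 := ((x ++ [b]).rotate_perm (2 * n + 1 - s)).count_eq true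
    have h2 := ((x' ++ [b']).rotate_perm (2 * n + 1 - s')).count_eq true
    rw [← h1, ← h2, h]
  have hbb : b = b' := by
    cases b <;> cases b' <;> simp [List.count_append, hxc, hxc'] at hcnt ⊢
  subst hbb
  -- rotate both sides by s' to cancel the right-hand rotation
  have hrl : (x' ++ [b]).rotate (2 * n + 1) = x' ++ [b] := by
    conv_lhs => rw [← hwl']
    exact List.rotate_length _
  have hrlx : (x ++ [b]).rotate (2 * n + 1) = x ++ [b] := by
    conv_lhs => rw [← hwl]
    exact List.rotate_length _
  have h3 : (x ++ [b]).rotate (2 * n + 1 - s + s') = x' ++ [b] := by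
    have h4 := congrArg (fun l => l.rotate s') h
    simp only [List.rotate_rotate] at h4
    have hL : 2 * n + 1 - s' + s' = 2 * n + 1 := by omega
    rwa [hL, hrl] at h4
  rcases lt_trichotomy s s' with hlt | heq | hgt
  · -- s < s' : nontrivial rotation by s' - s, contradiction
    have harith : 2 * n + 1 - s + s' = 2 * n + 1 + (s' - s) := by omega
    rw [harith, ← List.rotate_rotate, hrlx] at h3
    exact (key n (s' - s) x x' b hx hx' (by omega) (by omega) h3.symm).elim
  · -- s = s'
    have harith : 2 * n + 1 - s + s' = 2 * n + 1 := by omega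
    rw [harith, hrlx] at h3
    exact ⟨List.append_cancel_right h3, rfl, heq⟩
  · -- s' < s : nontrivial rotation by 2n+1-(s-s'), contradiction
    exact (key n (2 * n + 1 - s + s') x x' b hx hx' (by omega) (by omega) h3.symm).elim
end

section
/- For any two distinct pullable Dyck words x ≠ x' of length 2n, the vertex sets S(x) and S(x') are disjoint, where S(x) := {f^i(⟨x,0,0⟩) : 0 ≤ i ≤ 6} ∪ {⟨p(x),0,0⟩, f(⟨p(x),0,0⟩)}. -/
/-- The map `f` on triples `⟨x,b,s⟩` (nut `x`, bit `b`, shift `s` mod `2n+1`),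
relative to the tree rotation `r`:
`f ⟨x,0,s⟩ = ⟨r x, 1, s+1⟩` and `f ⟨x,1,s⟩ = ⟨x,0,s⟩`. -/
def fmap (n : ℕ) (r : List Bool → List Bool) :
    List Bool × Bool × ℕ → List Bool × Bool × ℕ
  | (x, false, s) => (r x, true, (s + 1) % (2 * n + 1))
  | (x, true, s) => (x, false, s)

/-- The nine vertices `S(x) = {fⁱ⟨x,0,0⟩ : 0 ≤ i ≤ 6} ∪ {⟨p(x),0,0⟩, f⟨p(x),0,0⟩}`
touched by the gluing 6-cycle of the pullable word `x`, where `px = p(x)`. -/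
def glueSet (n : ℕ) (r : List Bool → List Bool) (x px : List Bool) :
    Set (List Bool × Bool × ℕ) :=
  {p | ∃ i ≤ 6, (fmap n r)^[i] (x, false, 0) = p} ∪
    {(px, false, 0), fmap n r (px, false, 0)}

lemma prefix_append_cases {p a b : List Bool} (h : p <+: a ++ b) :
    p <+: a ∨ ∃ q, q <+: b ∧ p = a ++ q := by
  by_cases hl : p.length ≤ a.length
  · exact Or.inl (List.prefix_of_prefix_length_le h (List.prefix_append a b) hl)
  · have ha : a <+: p :=
      List.prefix_of_prefix_length_le (List.prefix_append a b) h (by omega)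
    obtain ⟨q, rfl⟩ := ha
    right; exact ⟨q, (List.prefix_append_right_inj a).1 h, rfl⟩

lemma dyck_nil : IsDyckWord [] := ⟨rfl, fun p hp => by simp [List.prefix_nil.1 hp]⟩

lemma dyck_append {a b : List Bool} (ha : IsDyckWord a) (hb : IsDyckWord b) :
    IsDyckWord (a ++ b) := by
  refine ⟨by simp [List.count_append, ha.1, hb.1], fun p hp => ?_⟩
  rcases prefix_append_cases hp with h | ⟨q, hq, rfl⟩
  · exact ha.2 p h
  · have := hb.2 q hq
    have h2 := ha.1
    simp only [List.count_append]
    omega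
lemma dyck_wrap {u : List Bool} (hu : IsDyckWord u) :
    IsDyckWord ([true] ++ u ++ [false]) := by
  constructor
  · simp [List.count_append, hu.1]
  · intro p hp
    rcases prefix_append_cases (a := [true] ++ u) (b := [false]) (by simpa [List.append_assoc] using hp) with h | ⟨q, hq, rfl⟩
    · rcases prefix_append_cases (a := [true]) (b := u) h with h1 | ⟨q, hq, rfl⟩
      · have : p = [] ∨ p = [true] := by
          obtain ⟨t, ht⟩ := h1
          rcases p with _ | ⟨x, p⟩ <;> simp_all
        rcases this with rfl | rfl <;> simp
      · have := hu.2 q hq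
        simp [List.count_append]; omega
    · have : q = [] ∨ q = [false] := by
        rcases hq with ⟨t, ht⟩
        rcases q with _ | ⟨x, _ | ⟨y, q⟩⟩ <;> simp_all
      rcases this with rfl | rfl <;> simp [List.count_append, hu.1]

lemma sep_true_aux {u v u' v' : List Bool} (hu : u.count true = u.count false)
    (hu' : u'.count true = u'.count false) (hv : IsDyckPrefix v)
    (h : u ++ [true] ++ v = u' ++ [true] ++ v') : ¬ u.length < u'.length := by
  intro hlt
  set k := u'.length - u.length - 1 with hk
  have hu'eq : u' = (u ++ [true]) ++ v.take k := by
    have h2 := congrArg (List.take u'.length) h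
    rw [List.append_assoc u' [true] v', List.take_left' (l₁ := u') rfl] at h2
    rw [List.append_assoc, ← List.append_assoc u [true] v,
      show u'.length = (u ++ [true]).length + k by simp; omega,
      List.take_length_add_append] at h2
    exact h2.symm
  have hcv := hv _ (List.take_prefix k v)
  have h1 : u'.count true = u.count true + 1 + (v.take k).count true := by
    rw [hu'eq]; simp [List.count_append]; omega
  have h2 : u'.count false = u.count false + (v.take k).count false := by
    rw [hu'eq]; simp [List.count_append]
  omega

lemma sep_true_inj {u v u' v' : List Bool} (hu : u.count true = u.count false)
    (hu' : u'.count true = u'.count false) (hv : IsDyckPrefix v) (hv' : IsDyckPrefix v')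
    (h : u ++ [true] ++ v = u' ++ [true] ++ v') : u = u' ∧ v = v' := by
  have h1 := sep_true_aux hu hu' hv h
  have h2 := sep_true_aux hu' hu hv' h.symm
  have hlen : u.length = u'.length := by omega
  obtain ⟨h3, h4⟩ := List.append_inj (by simpa [List.append_assoc] using h) hlen
  exact ⟨h3, by simpa using h4⟩

lemma sep_false_aux {u v u' v' : List Bool} (hu : u.count true = u.count false)
    (hu' : IsDyckPrefix u')
    (h : u ++ [false] ++ v = u' ++ [false] ++ v') : ¬ u.length < u'.length := by
  intro hlt
  have hpre : u ++ [false] = u'.take (u.length + 1) := by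
    have h2 := congrArg (List.take (u.length + 1)) h
    rw [List.take_left' (l₁ := u ++ [false]) (by simp),
      List.append_assoc u' [false] v', List.take_append] at h2
    simpa [show u.length + 1 - u'.length = 0 by omega] using h2
  have := hu' _ (hpre ▸ List.take_prefix (u.length + 1) u')
  simp [List.count_append] at this
  omega

lemma sep_false_inj {u v u' v' : List Bool} (hu : IsDyckWord u) (hu' : IsDyckWord u')
    (h : u ++ [false] ++ v = u' ++ [false] ++ v') : u = u' ∧ v = v' := by
  have h1 := sep_false_aux hu.1 hu'.2 h
  have h2 := sep_false_aux hu'.1 hu.2 h.symm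
  have hlen : u.length = u'.length := by omega
  obtain ⟨h3, h4⟩ := List.append_inj (by simpa [List.append_assoc] using h) hlen
  exact ⟨h3, by simpa using h4⟩


lemma mem_glue {n : ℕ} {r : List Bool → List Bool} {x px : List Bool}
    {a : List Bool × Bool × ℕ} (hn : 2 ≤ n) (h : a ∈ glueSet n r x px) :
    a = (x, false, 0) ∨ a = (r x, true, 1) ∨ a = (r x, false, 1) ∨
      a = (r (r x), true, 2) ∨ a = (r (r x), false, 2) ∨
      a = (r (r (r x)), true, 3) ∨ a = (r (r (r x)), false, 3) ∨
      a = (px, false, 0) ∨ a = (r px, true, 1) := by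
  have m1 : (0 + 1) % (2 * n + 1) = 1 := Nat.mod_eq_of_lt (by omega)
  have m2 : (1 + 1) % (2 * n + 1) = 2 := Nat.mod_eq_of_lt (by omega)
  have m3 : (2 + 1) % (2 * n + 1) = 3 := Nat.mod_eq_of_lt (by omega)
  have e1 : (fmap n r)^[1] (x, false, 0) = (r x, true, 1) := by
    simp [fmap, m1]
  have e2 : (fmap n r)^[2] (x, false, 0) = (r x, false, 1) := by
    rw [show (2 : ℕ) = 1 + 1 from rfl, Function.iterate_succ_apply', e1]; rfl
  have e3 : (fmap n r)^[3] (x, false, 0) = (r (r x), true, 2) := by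
    rw [show (3 : ℕ) = 2 + 1 from rfl, Function.iterate_succ_apply', e2]
    simp [fmap, m2]
  have e4 : (fmap n r)^[4] (x, false, 0) = (r (r x), false, 2) := by
    rw [show (4 : ℕ) = 3 + 1 from rfl, Function.iterate_succ_apply', e3]; rfl
  have e5 : (fmap n r)^[5] (x, false, 0) = (r (r (r x)), true, 3) := by
    rw [show (5 : ℕ) = 4 + 1 from rfl, Function.iterate_succ_apply', e4]
    simp [fmap, m3]
  have e6 : (fmap n r)^[6] (x, false, 0) = (r (r (r x)), false, 3) := by
    rw [show (6 : ℕ) = 5 + 1 from rfl, Function.iterate_succ_apply', e5]; rfl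
  have e1' : fmap n r (x, false, 0) = (r x, true, 1) := by simp [fmap, m1]
  rcases h with h | h
  · obtain ⟨i, hi, rfl⟩ := h
    interval_cases i <;>
      simp only [Function.iterate_zero, Function.iterate_one, id_eq, e1', e2, e3, e4, e5, e6] <;>
      tauto
  · simp only [Set.mem_insert_iff, Set.mem_singleton_iff] at h
    rcases h with rfl | rfl
    · tauto
    · have : fmap n r (px, false, 0) = (r px, true, 1) := by simp [fmap, m1]
      rw [this]; tauto

/-- for distinct pullable Dyck words `x = 110u0v ≠ x' = 110u'0v'` of
length `2n`, the vertex sets `S(x)` and `S(x')` are disjoint. -/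
theorem glue_sets_disjoint (n : ℕ) (r : List Bool → List Bool)
    (hr : ∀ u v : List Bool, IsDyckWord u → IsDyckWord v →
      r ([true] ++ u ++ [false] ++ v) = u ++ [true] ++ v ++ [false])
    (u v u' v' : List Bool)
    (hu : IsDyckWord u) (hv : IsDyckWord v) (hu' : IsDyckWord u') (hv' : IsDyckWord v')
    (hx : DyckN n ([true, true, false] ++ u ++ [false] ++ v))
    (hx' : DyckN n ([true, true, false] ++ u' ++ [false] ++ v'))
    (hne : [true, true, false] ++ u ++ [false] ++ v ≠
      [true, true, false] ++ u' ++ [false] ++ v') :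
    Disjoint
      (glueSet n r ([true, true, false] ++ u ++ [false] ++ v)
        ([true, false, true] ++ u ++ [false] ++ v))
      (glueSet n r ([true, true, false] ++ u' ++ [false] ++ v')
        ([true, false, true] ++ u' ++ [false] ++ v')) := by
  -- n ≥ 2
  have hn : 2 ≤ n := by
    have := hx.1
    simp [List.length_append] at this
    omega
  have d10 : IsDyckWord [true, false] := by simpa using dyck_wrap dyck_nil
  -- the rotation computations for x = 110u0v and px = 101u0v
  have hw1 : IsDyckWord (u ++ [true] ++ v ++ [false]) := by
    simpa [List.append_assoc] using dyck_append hu (dyck_wrap hv)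
  have hw1' : IsDyckWord (u' ++ [true] ++ v' ++ [false]) := by
    simpa [List.append_assoc] using dyck_append hu' (dyck_wrap hv')
  have e1 : r ([true, true, false] ++ u ++ [false] ++ v) =
      [true, false] ++ u ++ [true] ++ v ++ [false] := by
    have := hr ([true, false] ++ u) v (dyck_append d10 hu) hv
    rw [← this]; congr 1; try simp
  have e2 : r ([true, false] ++ u ++ [true] ++ v ++ [false]) =
      [true] ++ u ++ [true] ++ v ++ [false, false] := by
    have := hr [] (u ++ [true] ++ v ++ [false]) dyck_nil hw1
    rw [show ([true, false] ++ u ++ [true] ++ v ++ [false] : List Bool) =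
      [true] ++ [] ++ [false] ++ (u ++ [true] ++ v ++ [false]) by simp, this]
    try simp
  have e3 : r ([true] ++ u ++ [true] ++ v ++ [false, false]) =
      u ++ [true] ++ v ++ [false, true, false] := by
    have := hr (u ++ [true] ++ v ++ [false]) [] hw1 dyck_nil
    rw [show ([true] ++ u ++ [true] ++ v ++ [false, false] : List Bool) =
      [true] ++ (u ++ [true] ++ v ++ [false]) ++ [false] ++ [] by simp, this]
    try simp
  have e4 : r ([true, false, true] ++ u ++ [false] ++ v) =
      [true, true] ++ u ++ [false] ++ v ++ [false] := by
    have := hr [] ([true] ++ u ++ [false] ++ v) dyck_nil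
      (by simpa [List.append_assoc] using dyck_append (dyck_wrap hu) hv)
    rw [show ([true, false, true] ++ u ++ [false] ++ v : List Bool) =
      [true] ++ [] ++ [false] ++ ([true] ++ u ++ [false] ++ v) by simp, this]
    try simp
  have e1' : r ([true, true, false] ++ u' ++ [false] ++ v') =
      [true, false] ++ u' ++ [true] ++ v' ++ [false] := by
    have := hr ([true, false] ++ u') v' (dyck_append d10 hu') hv'
    rw [← this]; congr 1; try simp
  have e2' : r ([true, false] ++ u' ++ [true] ++ v' ++ [false]) =
      [true] ++ u' ++ [true] ++ v' ++ [false, false] := by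
    have := hr [] (u' ++ [true] ++ v' ++ [false]) dyck_nil hw1'
    rw [show ([true, false] ++ u' ++ [true] ++ v' ++ [false] : List Bool) =
      [true] ++ [] ++ [false] ++ (u' ++ [true] ++ v' ++ [false]) by simp, this]
    try simp
  have e3' : r ([true] ++ u' ++ [true] ++ v' ++ [false, false]) =
      u' ++ [true] ++ v' ++ [false, true, false] := by
    have := hr (u' ++ [true] ++ v' ++ [false]) [] hw1' dyck_nil
    rw [show ([true] ++ u' ++ [true] ++ v' ++ [false, false] : List Bool) =
      [true] ++ (u' ++ [true] ++ v' ++ [false]) ++ [false] ++ [] by simp, this]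
    try simp
  have e4' : r ([true, false, true] ++ u' ++ [false] ++ v') =
      [true, true] ++ u' ++ [false] ++ v' ++ [false] := by
    have := hr [] ([true] ++ u' ++ [false] ++ v') dyck_nil
      (by simpa [List.append_assoc] using dyck_append (dyck_wrap hu') hv')
    rw [show ([true, false, true] ++ u' ++ [false] ++ v' : List Bool) =
      [true] ++ [] ++ [false] ++ ([true] ++ u' ++ [false] ++ v') by simp, this]
    try simp
  -- the word inequalities
  have N2 : ([true, false, true] ++ u ++ [false] ++ v : List Bool) ≠
      [true, false, true] ++ u' ++ [false] ++ v' := by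
    intro hEq
    obtain ⟨rfl, rfl⟩ := sep_false_inj hu hu' (by simpa [List.append_assoc] using hEq)
    exact hne rfl
  have N3 : ([true, false] ++ u ++ [true] ++ v ++ [false] : List Bool) ≠
      [true, false] ++ u' ++ [true] ++ v' ++ [false] := by
    intro hEq
    obtain ⟨rfl, rfl⟩ := sep_true_inj hu.1 hu'.1 hv.2 hv'.2
      (by simpa [List.append_assoc] using List.append_cancel_right hEq)
    exact hne rfl
  have N4 : ([true, true] ++ u ++ [false] ++ v ++ [false] : List Bool) ≠
      [true, true] ++ u' ++ [false] ++ v' ++ [false] := by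
    intro hEq
    obtain ⟨rfl, rfl⟩ := sep_false_inj hu hu'
      (by simpa [List.append_assoc] using List.append_cancel_right hEq)
    exact hne rfl
  have N5 : ([true] ++ u ++ [true] ++ v ++ [false, false] : List Bool) ≠
      [true] ++ u' ++ [true] ++ v' ++ [false, false] := by
    intro hEq
    obtain ⟨rfl, rfl⟩ := sep_true_inj hu.1 hu'.1 hv.2 hv'.2
      (by simpa [List.append_assoc] using List.append_cancel_right hEq)
    exact hne rfl
  have N6 : (u ++ [true] ++ v ++ [false, true, false] : List Bool) ≠
      u' ++ [true] ++ v' ++ [false, true, false] := by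
    intro hEq
    obtain ⟨rfl, rfl⟩ := sep_true_inj hu.1 hu'.1 hv.2 hv'.2
      (by simpa [List.append_assoc] using List.append_cancel_right hEq)
    exact hne rfl
  rw [Set.disjoint_left]
  intro a ha ha'
  have d1 := mem_glue hn ha
  have d2 := mem_glue hn ha'
  rw [e1, e2, e3, e4] at d1
  rw [e1', e2', e3', e4'] at d2
  rcases d1 with rfl | rfl | rfl | rfl | rfl | rfl | rfl | rfl | rfl <;>
    rcases d2 with h | h | h | h | h | h | h | h | h <;>
    (injection h with h1 h2; injection h2 with h3 h4;
     first
      | exact absurd h3 (by decide)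
      | exact absurd h4 (by decide)
      | exact hne h1
      | exact N2 h1
      | exact N3 h1
      | exact N4 h1
      | exact N5 h1
      | exact N6 h1
      | simp at h1)
end
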